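/- Let A ∈ ℝ^{m×n}, x ∈ ℝ^n, r ∈ ℝ^m with r ≠ 0, M a symmetric invertible n×n matrix, and K as in the STLS condition-number formula. Define W = [Aᵀ, ‖x‖ Aᵀ(I_m − (1/‖r‖²) r rᵀ), ‖r‖(I_n − (1/‖r‖²) Aᵀ r xᵀ)] ∈ ℝ^{n×(2m+n)}. Then K Kᵀ = M⁻¹ W Wᵀ M⁻¹, and consequently ‖K‖₂ = ‖M⁻¹ W‖₂. -/

import Mathlib

open Matrix Kronecker

/-- The Euclidean norm of a real vector. -/
noncomputable def vecEnorm {n : Type*} [Fintype n] (v : n → ℝ) : ℝ :=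
  Real.sqrt (∑ i, v i ^ 2)

/-- The spectral (operator 2-)norm of a real matrix. -/
noncomputable def specNorm {m n : Type*} [Fintype m] [Fintype n] [DecidableEq n]
    (A : Matrix m n ℝ) : ℝ :=
  ‖LinearMap.toContinuousLinearMap (Matrix.toEuclideanLin A)‖

/-- The row vector `[xᵀ, −1]` of length `n+1`. -/
def rowAug {n : ℕ} (x : Fin n → ℝ) : Matrix Unit (Fin n ⊕ Unit) ℝ :=
  Matrix.of fun _ j => Sum.elim x (fun _ => (-1 : ℝ)) j

/-- The STLS Fréchet derivative matrix
`K = M⁻¹(((2/‖r‖²)Aᵀ r rᵀ − Aᵀ)([xᵀ,−1] ⊗ I_m) − [I_n ⊗ rᵀ, 0_{n×m}])`. -/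
noncomputable def KSTLS {m n : ℕ} (A : Matrix (Fin m) (Fin n) ℝ) (x : Fin n → ℝ)
    (r : Fin m → ℝ) (M : Matrix (Fin n) (Fin n) ℝ) :
    Matrix (Fin n) ((Fin n ⊕ Unit) × Fin m) ℝ :=
  M⁻¹ *
    (((2 / vecEnorm r ^ 2) • (Aᵀ * vecMulVec r r) - Aᵀ) *
        Matrix.reindex (Equiv.punitProd (Fin m)) (Equiv.refl _)
          (rowAug x ⊗ₖ (1 : Matrix (Fin m) (Fin m) ℝ)) -
      Matrix.reindex (Equiv.prodPUnit (Fin n))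
        ((Equiv.sumProdDistrib (Fin n) Unit (Fin m)).symm)
        (fromCols ((1 : Matrix (Fin n) (Fin n) ℝ) ⊗ₖ Matrix.of (fun (_ : Unit) k => r k))
          (0 : Matrix (Fin n × Unit) (Unit × Fin m) ℝ)))

/-- The matrix `W = [Aᵀ, ‖x‖Aᵀ(I − (1/‖r‖²)rrᵀ), ‖r‖(I − (1/‖r‖²)Aᵀ r xᵀ)]`. -/
noncomputable def WSTLS {m n : ℕ} (A : Matrix (Fin m) (Fin n) ℝ) (x : Fin n → ℝ)
    (r : Fin m → ℝ) : Matrix (Fin n) (Fin m ⊕ (Fin m ⊕ Fin n)) ℝ :=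
  fromCols Aᵀ
    (fromCols
      (vecEnorm x • (Aᵀ * ((1 : Matrix (Fin m) (Fin m) ℝ) - (1 / vecEnorm r ^ 2) • vecMulVec r r)))
      (vecEnorm r • ((1 : Matrix (Fin n) (Fin n) ℝ) - (1 / vecEnorm r ^ 2) • (Aᵀ * vecMulVec r x))))

open scoped Matrix.Norms.L2Operator in
lemma specNorm_congr {p q q' : Type*} [Fintype p] [Fintype q] [Fintype q']
    [DecidableEq p] [DecidableEq q] [DecidableEq q']
    (B : Matrix p q ℝ) (C : Matrix p q' ℝ) (h : B * Bᵀ = C * Cᵀ) :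
    specNorm B = specNorm C := by
  have hBt : (Bᵀ)ᴴ = B := by ext i j; simp [Matrix.conjTranspose_apply]
  have hCt : (Cᵀ)ᴴ = C := by ext i j; simp [Matrix.conjTranspose_apply]
  have eB : ‖B‖ = ‖Bᵀ‖ := by
    have := Matrix.l2_opNorm_conjTranspose Bᵀ; rwa [hBt] at this
  have eC : ‖C‖ = ‖Cᵀ‖ := by
    have := Matrix.l2_opNorm_conjTranspose Cᵀ; rwa [hCt] at this
  have h1 : ‖B‖ * ‖B‖ = ‖C‖ * ‖C‖ := by
    calc ‖B‖ * ‖B‖ = ‖Bᵀ‖ * ‖Bᵀ‖ := by rw [eB]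
    _ = ‖(Bᵀ)ᴴ * Bᵀ‖ := (Matrix.l2_opNorm_conjTranspose_mul_self _).symm
    _ = ‖(Cᵀ)ᴴ * Cᵀ‖ := by rw [hBt, hCt, h]
    _ = ‖Cᵀ‖ * ‖Cᵀ‖ := Matrix.l2_opNorm_conjTranspose_mul_self _
    _ = ‖C‖ * ‖C‖ := by rw [eC]
  show ‖B‖ = ‖C‖
  exact mul_self_inj (norm_nonneg _) (norm_nonneg _) |>.mp h1

lemma vecMulVec_mul_vecMulVec' {m n p : Type*} [Fintype n]
    (a : m → ℝ) (b c : n → ℝ) (d : p → ℝ) :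
    vecMulVec a b * vecMulVec c d = (b ⬝ᵥ c) • vecMulVec a d := by
  ext i j
  simp only [Matrix.mul_apply, vecMulVec_apply, Matrix.smul_apply, dotProduct,
    smul_eq_mul, Finset.sum_mul]
  exact Finset.sum_congr rfl fun k _ => by ring

lemma mul_vecMulVec' {m n p : Type*} [Fintype n]
    (M : Matrix m n ℝ) (v : n → ℝ) (w : p → ℝ) :
    M * vecMulVec v w = vecMulVec (M *ᵥ v) w := by
  ext i j
  simp only [Matrix.mul_apply, vecMulVec_apply, Matrix.mulVec, dotProduct, Finset.sum_mul]
  exact Finset.sum_congr rfl fun k _ => by ring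

lemma vecMulVec_mul' {m n p : Type*} [Fintype n]
    (v : m → ℝ) (w : n → ℝ) (M : Matrix n p ℝ) :
    vecMulVec v w * M = vecMulVec v (w ᵥ* M) := by
  ext i j
  simp only [Matrix.mul_apply, vecMulVec_apply, Matrix.vecMul, dotProduct, Finset.mul_sum]
  exact Finset.sum_congr rfl fun k _ => by ring

lemma vecMulVec_transpose' {m n : Type*} (v : m → ℝ) (w : n → ℝ) :
    (vecMulVec v w)ᵀ = vecMulVec w v := by
  ext i j; simp [vecMulVec_apply, mul_comm]

section blocks
variable {m n : ℕ}

lemma EEt (x : Fin n → ℝ) :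
    (Matrix.reindex (Equiv.punitProd (Fin m)) (Equiv.refl _)
        (rowAug x ⊗ₖ (1 : Matrix (Fin m) (Fin m) ℝ))) *
      (Matrix.reindex (Equiv.punitProd (Fin m)) (Equiv.refl _)
        (rowAug x ⊗ₖ (1 : Matrix (Fin m) (Fin m) ℝ)))ᵀ =
    ((∑ j, x j ^ 2) + 1) • (1 : Matrix (Fin m) (Fin m) ℝ) := by
  ext k k'
  simp [Matrix.mul_apply, rowAug, Fintype.sum_prod_type, Fintype.sum_sum_type,
    Matrix.one_apply, Finset.sum_ite_eq, Finset.mul_sum, apply_ite, mul_ite, ite_mul,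
    Matrix.smul_apply, smul_eq_mul]
  by_cases h : k = k' <;> simp [h, pow_two, add_mul, Finset.sum_mul]

lemma DDt (r : Fin m → ℝ) :
    (Matrix.reindex (Equiv.prodPUnit (Fin n))
        ((Equiv.sumProdDistrib (Fin n) Unit (Fin m)).symm)
        (fromCols ((1 : Matrix (Fin n) (Fin n) ℝ) ⊗ₖ Matrix.of (fun (_ : Unit) k => r k))
          (0 : Matrix (Fin n × Unit) (Unit × Fin m) ℝ))) *
      (Matrix.reindex (Equiv.prodPUnit (Fin n))
        ((Equiv.sumProdDistrib (Fin n) Unit (Fin m)).symm)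
        (fromCols ((1 : Matrix (Fin n) (Fin n) ℝ) ⊗ₖ Matrix.of (fun (_ : Unit) k => r k))
          (0 : Matrix (Fin n × Unit) (Unit × Fin m) ℝ)))ᵀ =
    (∑ k, r k ^ 2) • (1 : Matrix (Fin n) (Fin n) ℝ) := by
  ext i i'
  simp [Matrix.mul_apply, Fintype.sum_prod_type, Fintype.sum_sum_type, fromCols,
    Matrix.one_apply, Finset.sum_ite_eq, Finset.mul_sum, apply_ite, mul_ite, ite_mul,
    Matrix.smul_apply, smul_eq_mul, Equiv.sumProdDistrib]
  by_cases h : i = i' <;> simp [h, pow_two]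

lemma EDt (x : Fin n → ℝ) (r : Fin m → ℝ) :
    (Matrix.reindex (Equiv.punitProd (Fin m)) (Equiv.refl _)
        (rowAug x ⊗ₖ (1 : Matrix (Fin m) (Fin m) ℝ))) *
      (Matrix.reindex (Equiv.prodPUnit (Fin n))
        ((Equiv.sumProdDistrib (Fin n) Unit (Fin m)).symm)
        (fromCols ((1 : Matrix (Fin n) (Fin n) ℝ) ⊗ₖ Matrix.of (fun (_ : Unit) k => r k))
          (0 : Matrix (Fin n × Unit) (Unit × Fin m) ℝ)))ᵀ =
    vecMulVec r x := by
  ext k i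
  simp [Matrix.mul_apply, rowAug, Fintype.sum_prod_type, Fintype.sum_sum_type, fromCols,
    Matrix.one_apply, Finset.sum_ite_eq, Finset.mul_sum, apply_ite, mul_ite, ite_mul,
    vecMulVec_apply, Equiv.sumProdDistrib, mul_comm]


section main
variable {m n : ℕ}

lemma NNt_eq_WWt (A : Matrix (Fin m) (Fin n) ℝ) (x : Fin n → ℝ) (r : Fin m → ℝ)
    (hr : r ≠ 0) :
    (((2 / vecEnorm r ^ 2) • (Aᵀ * vecMulVec r r) - Aᵀ) *
        Matrix.reindex (Equiv.punitProd (Fin m)) (Equiv.refl _)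
          (rowAug x ⊗ₖ (1 : Matrix (Fin m) (Fin m) ℝ)) -
      Matrix.reindex (Equiv.prodPUnit (Fin n))
        ((Equiv.sumProdDistrib (Fin n) Unit (Fin m)).symm)
        (fromCols ((1 : Matrix (Fin n) (Fin n) ℝ) ⊗ₖ Matrix.of (fun (_ : Unit) k => r k))
          (0 : Matrix (Fin n × Unit) (Unit × Fin m) ℝ))) *
    (((2 / vecEnorm r ^ 2) • (Aᵀ * vecMulVec r r) - Aᵀ) *
        Matrix.reindex (Equiv.punitProd (Fin m)) (Equiv.refl _)
          (rowAug x ⊗ₖ (1 : Matrix (Fin m) (Fin m) ℝ)) -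
      Matrix.reindex (Equiv.prodPUnit (Fin n))
        ((Equiv.sumProdDistrib (Fin n) Unit (Fin m)).symm)
        (fromCols ((1 : Matrix (Fin n) (Fin n) ℝ) ⊗ₖ Matrix.of (fun (_ : Unit) k => r k))
          (0 : Matrix (Fin n × Unit) (Unit × Fin m) ℝ)))ᵀ =
    WSTLS A x r * (WSTLS A x r)ᵀ := by
  -- notation
  set E := Matrix.reindex (Equiv.punitProd (Fin m)) (Equiv.refl ((Fin n ⊕ Unit) × Fin m))
      (rowAug x ⊗ₖ (1 : Matrix (Fin m) (Fin m) ℝ)) with hE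
  set D := Matrix.reindex (Equiv.prodPUnit (Fin n))
      ((Equiv.sumProdDistrib (Fin n) Unit (Fin m)).symm)
      (fromCols ((1 : Matrix (Fin n) (Fin n) ℝ) ⊗ₖ Matrix.of (fun (_ : Unit) k => r k))
        (0 : Matrix (Fin n × Unit) (Unit × Fin m) ℝ)) with hD
  set S := ∑ k, r k ^ 2 with hSdef
  set X := ∑ j, x j ^ 2 with hXdef
  have hS : S ≠ 0 := by
    have h0 : ∃ k, r k ≠ 0 := Function.ne_iff.mp hr
    obtain ⟨k, hk⟩ := h0
    have : 0 < S := Finset.sum_pos' (fun i _ => sq_nonneg _)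
      ⟨k, Finset.mem_univ k, by positivity⟩
    exact ne_of_gt this
  have hre : vecEnorm r ^ 2 = S := by
    rw [vecEnorm]; exact Real.sq_sqrt (by positivity)
  have hrm : vecEnorm r * vecEnorm r = S := by rw [← pow_two]; exact hre
  have hxm : vecEnorm x * vecEnorm x = X := by
    rw [vecEnorm]; exact Real.mul_self_sqrt (by positivity)
  have hxm2 : vecEnorm x ^ 2 = X := by
    rw [vecEnorm]; exact Real.sq_sqrt (by positivity)
  have hdot : r ⬝ᵥ r = S := by simp [dotProduct, hSdef, sq]
  have hxdot : x ⬝ᵥ x = X := by simp [dotProduct, hXdef, sq]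
  set u := Aᵀ *ᵥ r with hu
  have hrva : r ᵥ* A = u := by rw [hu, Matrix.mulVec_transpose]
  have key1 : Aᵀ * vecMulVec r r = vecMulVec u r := mul_vecMulVec' _ _ _
  have key2 : Aᵀ * vecMulVec r x = vecMulVec u x := mul_vecMulVec' _ _ _
  have key3 : Aᵀ * vecMulVec r u = vecMulVec u u := mul_vecMulVec' _ _ _
  have key4 : vecMulVec u r * A = vecMulVec u u := by rw [vecMulVec_mul', hrva]
  have key5 : vecMulVec x r * A = vecMulVec x u := by rw [vecMulVec_mul', hrva]
  -- the B-matrix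
  set B := (2 / vecEnorm r ^ 2) • (Aᵀ * vecMulVec r r) - Aᵀ with hB
  have hBform : B = (2 / S) • vecMulVec u r - Aᵀ := by rw [hB, hre, key1]
  have hBt : Bᵀ = (2 / S) • vecMulVec r u - A := by
    rw [hBform, Matrix.transpose_sub, Matrix.transpose_smul, vecMulVec_transpose',
      Matrix.transpose_transpose]
  have hBBt : B * Bᵀ = Aᵀ * A := by
    rw [hBt, hBform]
    simp only [Matrix.sub_mul, Matrix.mul_sub, Matrix.smul_mul, Matrix.mul_smul,
      vecMulVec_mul_vecMulVec', hdot, key3, key4, smul_smul]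
    match_scalars <;> (try simp only [hre, hxm2]) <;> (field_simp; try ring)
  have hBrx : B * vecMulVec r x = vecMulVec u x := by
    rw [hBform]
    simp only [Matrix.sub_mul, Matrix.smul_mul, vecMulVec_mul_vecMulVec', hdot, key2,
      smul_smul]
    match_scalars <;> (try simp only [hre, hxm2]) <;> (field_simp; try ring)
  -- LHS
  have hEE : E * Eᵀ = (X + 1) • (1 : Matrix (Fin m) (Fin m) ℝ) := EEt x
  have hED : E * Dᵀ = vecMulVec r x := EDt x r
  have hDD : D * Dᵀ = S • (1 : Matrix (Fin n) (Fin n) ℝ) := DDt r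
  have hDE : D * Eᵀ = vecMulVec x r := by
    have := congrArg Matrix.transpose hED
    rwa [Matrix.transpose_mul, Matrix.transpose_transpose, vecMulVec_transpose'] at this
  have hlhs : (B * E - D) * (B * E - D)ᵀ =
      (X + 1) • (Aᵀ * A) - vecMulVec u x - vecMulVec x u + S • 1 := by
    rw [Matrix.transpose_sub, Matrix.transpose_mul, Matrix.sub_mul, Matrix.mul_sub,
      Matrix.mul_sub]
    rw [Matrix.mul_assoc B E (Eᵀ * Bᵀ), ← Matrix.mul_assoc E Eᵀ Bᵀ, hEE,
      Matrix.smul_mul, Matrix.one_mul, Matrix.mul_smul, hBBt]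
    rw [Matrix.mul_assoc B E Dᵀ, hED, hBrx]
    rw [← Matrix.mul_assoc D Eᵀ Bᵀ, hDE]
    have : vecMulVec x r * Bᵀ = vecMulVec x u := by
      rw [hBt]
      simp only [Matrix.mul_sub, Matrix.mul_smul, vecMulVec_mul_vecMulVec', hdot, key5,
        smul_smul]
      match_scalars <;> (try simp only [hre, hxm2]) <;> (field_simp; try ring)
    rw [this, hDD]
    abel
  -- RHS
  have hrhs : WSTLS A x r * (WSTLS A x r)ᵀ =
      (X + 1) • (Aᵀ * A) - vecMulVec u x - vecMulVec x u + S • 1 := by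
    have hU : Aᵀ * ((1 : Matrix (Fin m) (Fin m) ℝ) - (1 / vecEnorm r ^ 2) • vecMulVec r r) =
        Aᵀ - (1 / S) • vecMulVec u r := by
      rw [Matrix.mul_sub, Matrix.mul_one, Matrix.mul_smul, key1, hre]
    have hQ : (1 : Matrix (Fin n) (Fin n) ℝ) - (1 / vecEnorm r ^ 2) • (Aᵀ * vecMulVec r x) =
        1 - (1 / S) • vecMulVec u x := by rw [key2, hre]
    rw [WSTLS, Matrix.transpose_fromCols, Matrix.transpose_fromCols,
      Matrix.fromCols_mul_fromRows, Matrix.fromCols_mul_fromRows,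
      Matrix.transpose_smul, Matrix.transpose_smul, Matrix.smul_mul, Matrix.smul_mul,
      Matrix.mul_smul, Matrix.mul_smul, smul_smul, smul_smul, hxm, hrm,
      Matrix.transpose_transpose, hU, hQ]
    simp only [Matrix.transpose_sub, Matrix.transpose_smul, vecMulVec_transpose',
      Matrix.transpose_transpose, Matrix.transpose_one, Matrix.sub_mul, Matrix.mul_sub,
      Matrix.smul_mul, Matrix.mul_smul, Matrix.one_mul, Matrix.mul_one,
      vecMulVec_mul_vecMulVec', hdot, hxdot, key3, key4, smul_smul]
    match_scalars <;> (field_simp; try ring)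
  rw [hlhs, hrhs]

end main

/-- Theorem 2.3: `K Kᵀ = M⁻¹ W Wᵀ M⁻¹`, and hence `‖K‖₂ = ‖M⁻¹ W‖₂`. -/
theorem KSTLS_eq_W_form {m n : ℕ} (A : Matrix (Fin m) (Fin n) ℝ) (x : Fin n → ℝ)
    (r : Fin m → ℝ) (M : Matrix (Fin n) (Fin n) ℝ) (hM : IsUnit M) (hMs : Mᵀ = M)
    (hr : r ≠ 0) :
    KSTLS A x r M * (KSTLS A x r M)ᵀ = M⁻¹ * WSTLS A x r * (WSTLS A x r)ᵀ * M⁻¹ ∧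
      specNorm (KSTLS A x r M) = specNorm (M⁻¹ * WSTLS A x r) := by
  set N := (((2 / vecEnorm r ^ 2) • (Aᵀ * vecMulVec r r) - Aᵀ) *
        Matrix.reindex (Equiv.punitProd (Fin m)) (Equiv.refl _)
          (rowAug x ⊗ₖ (1 : Matrix (Fin m) (Fin m) ℝ)) -
      Matrix.reindex (Equiv.prodPUnit (Fin n))
        ((Equiv.sumProdDistrib (Fin n) Unit (Fin m)).symm)
        (fromCols ((1 : Matrix (Fin n) (Fin n) ℝ) ⊗ₖ Matrix.of (fun (_ : Unit) k => r k))
          (0 : Matrix (Fin n × Unit) (Unit × Fin m) ℝ))) with hN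
  have hK : KSTLS A x r M = M⁻¹ * N := rfl
  have hNW : N * Nᵀ = WSTLS A x r * (WSTLS A x r)ᵀ := NNt_eq_WWt A x r hr
  have hMinv : (M⁻¹)ᵀ = M⁻¹ := by rw [Matrix.transpose_nonsing_inv, hMs]
  set W := WSTLS A x r with hW
  have h1 : KSTLS A x r M * (KSTLS A x r M)ᵀ = M⁻¹ * (N * Nᵀ) * M⁻¹ := by
    rw [hK, Matrix.transpose_mul, hMinv, Matrix.mul_assoc (M⁻¹) N (Nᵀ * M⁻¹),
      ← Matrix.mul_assoc N Nᵀ M⁻¹, ← Matrix.mul_assoc]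
  have h2 : (M⁻¹ * W) * (M⁻¹ * W)ᵀ = M⁻¹ * (W * Wᵀ) * M⁻¹ := by
    rw [Matrix.transpose_mul, hMinv, Matrix.mul_assoc (M⁻¹) W (Wᵀ * M⁻¹),
      ← Matrix.mul_assoc W Wᵀ M⁻¹, ← Matrix.mul_assoc]
  have hmain : KSTLS A x r M * (KSTLS A x r M)ᵀ = M⁻¹ * W * Wᵀ * M⁻¹ := by
    rw [h1, hNW, Matrix.mul_assoc (M⁻¹) W Wᵀ]
  refine ⟨hmain, specNorm_congr _ _ ?_⟩
  rw [hmain, h2, Matrix.mul_assoc (M⁻¹) W Wᵀ]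


end blocks
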